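/- Let G be a simple graph on n vertices with maximum degree at most d, where d ≥ 1. Then for every integer w ≥ 1, the number of 3-trees of size w in G is at most n·(4d³)^w. -/

import Mathlib

set_option linter.unusedSectionVars false


/-- The auxiliary graph on a vertex set `W`, joining two vertices of `W` when their
distance in `G` is exactly `3`. -/
def distThreeGraph {V : Type*} (G : SimpleGraph V) (W : Finset V) :
    SimpleGraph {x // x ∈ W} :=
  SimpleGraph.fromRel (fun a b => G.dist a.1 b.1 = 3)

/-- `W` is a *3-tree* in `G`: the pairwise distances of the vertices of `W` are all at
least `3`, and the auxiliary graph joining vertices of `W` at distance exactly `3`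
is connected. -/
def IsThreeTree {V : Type*} (G : SimpleGraph V) (W : Finset V) : Prop :=
  (∀ u ∈ W, ∀ v ∈ W, u ≠ v → 3 ≤ G.edist u v) ∧ (distThreeGraph G W).Connected

open SimpleGraph Finset Function

namespace ThreeTreeAux

/-- lexicographic helper lemma -/
lemma lex_concat {α : Type*} [LinearOrder α] :
    ∀ {a b : List α} {x y : α}, a.length = b.length →
      List.Lex (· < ·) (a ++ [x]) (b ++ [y]) → a = b ∨ List.Lex (· < ·) a b := by
  intro a
  induction a with
  | nil =>
    intro b x y hlen _
    have : b = [] := by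
      cases b with
      | nil => rfl
      | cons q b' => simp at hlen
    exact Or.inl this.symm
  | cons p a' ih =>
    intro b x y hlen h
    cases b with
    | nil => simp at hlen
    | cons q b' =>
      have hlen' : a'.length = b'.length := by simpa using hlen
      cases h with
      | rel hr => exact Or.inr (List.Lex.rel hr)
      | cons h' =>
        rcases ih hlen' h' with h2 | h2
        · exact Or.inl (by rw [h2])
        · exact Or.inr (List.Lex.cons h2)

variable {V : Type*} [Fintype V] (G : SimpleGraph V) [DecidableRel G.Adj]

/-- indexed step to a neighbor -/
noncomputable def step (d : ℕ) (u : V) (a : Fin d) : V :=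
  (G.neighborFinset u).toList.getD a u

lemma step_spec {d : ℕ} (hdeg : ∀ v, G.degree v ≤ d) {u x : V} (h : G.Adj u x) :
    ∃ a : Fin d, step G d u a = x := by
  have hx : x ∈ (G.neighborFinset u).toList := by
    rw [Finset.mem_toList]; simpa using h
  obtain ⟨i, hi, hget⟩ := List.mem_iff_getElem.mp hx
  have hlen : (G.neighborFinset u).toList.length = G.degree u := by
    rw [Finset.length_toList]; rfl
  have hid : i < d := lt_of_lt_of_le (by rw [← hlen]; exact hi) (hdeg u)
  refine ⟨⟨i, hid⟩, ?_⟩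
  rw [step, List.getD_eq_getElem _ _ (by simpa [hlen] using hi)]
  exact hget

noncomputable def step3 (d : ℕ) (u : V) (t : Fin d × Fin d × Fin d) : V :=
  step G d (step G d (step G d u t.1) t.2.1) t.2.2

lemma step3_spec {d : ℕ} (hdeg : ∀ v, G.degree v ≤ d) {u x : V} (h : G.dist u x = 3) :
    ∃ t : Fin d × Fin d × Fin d, step3 G d u t = x := by
  have h0 : G.dist u x ≠ 0 := by omega
  obtain ⟨p, hp⟩ := SimpleGraph.exists_walk_of_dist_ne_zero h0
  rw [h] at hp
  cases p with
  | nil => simp at hp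
  | cons h1 p =>
    cases p with
    | nil => simp at hp
    | cons h2 p =>
      cases p with
      | nil => simp at hp
      | cons h3 p =>
        cases p with
        | nil =>
          obtain ⟨a, ha⟩ := step_spec G hdeg h1
          obtain ⟨b, hb⟩ := step_spec G hdeg h2
          obtain ⟨c, hc⟩ := step_spec G hdeg h3
          exact ⟨⟨a, b, c⟩, by simp [step3, ha, hb, hc]⟩
        | cons h4 p => simp [SimpleGraph.Walk.length_cons] at hp

section W

variable (W : Finset V)

noncomputable def root (hne : W.Nonempty) : {x // x ∈ W} :=
  ⟨W.toList.head (by simpa [← Finset.length_toList, List.length_pos_iff] using hne.card_pos),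
   by rw [← Finset.mem_toList]; exact List.head_mem _⟩

noncomputable def lvl (hne : W.Nonempty) (u : {x // x ∈ W}) : ℕ :=
  (distThreeGraph G W).dist (root W hne) u

lemma lvl_root (hne : W.Nonempty) : lvl G W hne (root W hne) = 0 := SimpleGraph.dist_self

lemma lvl_eq_zero (hc : (distThreeGraph G W).Connected) (hne : W.Nonempty) {u} :
    lvl G W hne u = 0 ↔ u = root W hne := by
  rw [lvl, hc.dist_eq_zero_iff]; exact eq_comm

lemma exists_parent (hc : (distThreeGraph G W).Connected) (hne : W.Nonempty) {u}
    (hu : u ≠ root W hne) :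
    ∃ x, (distThreeGraph G W).Adj x u ∧ lvl G W hne x + 1 = lvl G W hne u := by
  obtain ⟨q, hq⟩ := (hc u (root W hne)).exists_walk_length_eq_dist
  cases q with
  | nil => exact absurd rfl hu
  | @cons _ z _ h q' =>
    refine ⟨z, h.symm, ?_⟩
    have h1 : (distThreeGraph G W).dist (root W hne) z ≤ q'.length := by
      rw [SimpleGraph.dist_comm]
      have := SimpleGraph.dist_le q'
      simpa using this
    have h2 : (distThreeGraph G W).dist (root W hne) u ≤
        (distThreeGraph G W).dist (root W hne) z + 1 := by
      obtain ⟨p2, hp2⟩ := (hc (root W hne) z).exists_walk_length_eq_dist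
      have := SimpleGraph.dist_le (p2.concat h.symm)
      simpa [SimpleGraph.Walk.length_concat, hp2] using this
    have h3 : q'.length + 1 = (distThreeGraph G W).dist (root W hne) u := by
      rw [SimpleGraph.dist_comm]
      simpa [SimpleGraph.Walk.length_cons] using hq
    have h4 : lvl G W hne u ≠ 0 :=
      fun h0 => hu ((lvl_eq_zero G W hc hne).mp h0)
    unfold lvl at *
    omega

open Classical in
noncomputable def par (hc : (distThreeGraph G W).Connected) (hne : W.Nonempty)
    (u : {x // x ∈ W}) : {x // x ∈ W} :=
  if h : u = root W hne then u else (exists_parent G W hc hne h).choose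

lemma par_adj (hc : (distThreeGraph G W).Connected) (hne : W.Nonempty) {u}
    (hu : u ≠ root W hne) :
    (distThreeGraph G W).Adj (par G W hc hne u) u := by
  rw [par, dif_neg hu]
  exact (exists_parent G W hc hne hu).choose_spec.1

lemma lvl_par (hc : (distThreeGraph G W).Connected) (hne : W.Nonempty) {u}
    (hu : u ≠ root W hne) :
    lvl G W hne (par G W hc hne u) + 1 = lvl G W hne u := by
  rw [par, dif_neg hu]
  exact (exists_parent G W hc hne hu).choose_spec.2

open Classical in
noncomputable def keyAux (hc : (distThreeGraph G W).Connected) (hne : W.Nonempty)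
    (ι : V → ℕ) : ℕ → {x // x ∈ W} → List ℕ
  | 0, u => [ι u.1]
  | n+1, u => if u = root W hne then [ι u.1]
      else keyAux hc hne ι n (par G W hc hne u) ++ [ι u.1]

noncomputable def key (hc : (distThreeGraph G W).Connected) (hne : W.Nonempty)
    (ι : V → ℕ) (u : {x // x ∈ W}) : List ℕ :=
  keyAux G W hc hne ι (lvl G W hne u) u

lemma key_root (hc : (distThreeGraph G W).Connected) (hne : W.Nonempty) (ι : V → ℕ) :
    key G W hc hne ι (root W hne) = [ι (root W hne).1] := by
  rw [key, lvl_root, keyAux]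

lemma key_ne_root (hc : (distThreeGraph G W).Connected) (hne : W.Nonempty) (ι : V → ℕ) {u}
    (hu : u ≠ root W hne) :
    key G W hc hne ι u = key G W hc hne ι (par G W hc hne u) ++ [ι u.1] := by
  have h0 : lvl G W hne u ≠ 0 := fun h0 => hu ((lvl_eq_zero G W hc hne).mp h0)
  obtain ⟨m, hm⟩ : ∃ m, lvl G W hne u = m + 1 := ⟨lvl G W hne u - 1, by omega⟩
  have hp : lvl G W hne (par G W hc hne u) = m := by
    have := lvl_par G W hc hne hu; omega
  rw [key, key, hm, hp, keyAux, if_neg hu]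

lemma key_concat (hc : (distThreeGraph G W).Connected) (hne : W.Nonempty) (ι : V → ℕ) (u) :
    ∃ l, key G W hc hne ι u = l ++ [ι u.1] := by
  by_cases h : u = root W hne
  · subst h; exact ⟨[], by rw [key_root]; simp⟩
  · exact ⟨_, key_ne_root G W hc hne ι h⟩

lemma key_length (hc : (distThreeGraph G W).Connected) (hne : W.Nonempty) (ι : V → ℕ) :
    ∀ u, (key G W hc hne ι u).length = lvl G W hne u + 1 := by
  intro u
  generalize hn : lvl G W hne u = n
  induction n using Nat.strong_induction_on generalizing u with
  | _ n ih =>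
    by_cases h : u = root W hne
    · subst h
      rw [key_root]
      rw [lvl_root] at hn
      simp [← hn]
    · rw [key_ne_root G W hc hne ι h, List.length_append]
      have hp := lvl_par G W hc hne h
      have := ih (lvl G W hne (par G W hc hne u)) (by omega) (par G W hc hne u) rfl
      simp [this]; omega

lemma key_inj (hc : (distThreeGraph G W).Connected) (hne : W.Nonempty) {ι : V → ℕ}
    (hι : Injective ι) : Injective (key G W hc hne ι) := by
  intro u u' h
  obtain ⟨l, hl⟩ := key_concat G W hc hne ι u
  obtain ⟨l', hl'⟩ := key_concat G W hc hne ι u'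
  rw [hl, hl'] at h
  have : some (ι u.1) = some (ι u'.1) := by
    rw [← List.getLast?_concat (l := l), ← List.getLast?_concat (l := l'), h]
  exact Subtype.ext (hι (Option.some.inj this))

noncomputable def κ (hc : (distThreeGraph G W).Connected) (hne : W.Nonempty) (ι : V → ℕ)
    (u : {x // x ∈ W}) : ℕ ×ₗ List ℕ :=
  toLex (lvl G W hne u, key G W hc hne ι u)

lemma κ_inj (hc : (distThreeGraph G W).Connected) (hne : W.Nonempty) {ι : V → ℕ}
    (hι : Injective ι) : Injective (κ G W hc hne ι) := by
  intro u u' h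
  have h2 : key G W hc hne ι u = key G W hc hne ι u' :=
    congrArg (fun p => (ofLex p).2) h
  exact key_inj G W hc hne hι h2

noncomputable def ord (hc : (distThreeGraph G W).Connected) (hne : W.Nonempty) {ι : V → ℕ}
    (hι : Injective ι) : LinearOrder {x // x ∈ W} :=
  LinearOrder.lift' (κ G W hc hne ι) (κ_inj G W hc hne hι)

variable (hc : (distThreeGraph G W).Connected) (hne : W.Nonempty) {ι : V → ℕ}
  (hι : Injective ι)

lemma ord_le_iff {a b} : (ord G W hc hne hι).le a b ↔ κ G W hc hne ι a ≤ κ G W hc hne ι b :=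
  Iff.rfl

lemma ord_lt_iff {a b} : (ord G W hc hne hι).lt a b ↔ κ G W hc hne ι a < κ G W hc hne ι b :=
  Iff.rfl

lemma root_lt {u} (hu : u ≠ root W hne) :
    (ord G W hc hne hι).lt (root W hne) u := by
  rw [ord_lt_iff, κ, κ]
  rw [Prod.Lex.lt_iff]
  left
  simp only [lvl_root]
  have : lvl G W hne u ≠ 0 := fun h0 => hu ((lvl_eq_zero G W hc hne).mp h0)
  simp only [ofLex_toLex]
  omega

lemma par_lt {u} (hu : u ≠ root W hne) :
    (ord G W hc hne hι).lt (par G W hc hne u) u := by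
  rw [ord_lt_iff, κ, κ, Prod.Lex.lt_iff]
  left
  have := lvl_par G W hc hne hu
  simp only [ofLex_toLex]
  omega

lemma par_mono {u u'} (hu : u ≠ root W hne) (hu' : u' ≠ root W hne)
    (h : (ord G W hc hne hι).le u u') :
    (ord G W hc hne hι).le (par G W hc hne u) (par G W hc hne u') := by
  rw [ord_le_iff] at h ⊢
  rw [κ, κ, Prod.Lex.le_iff] at h ⊢
  have hp := lvl_par G W hc hne hu
  have hp' := lvl_par G W hc hne hu'
  rcases h with h | ⟨h1, h2⟩
  · left; simp only [ofLex_toLex] at h ⊢; omega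
  · simp only [ofLex_toLex] at h1 h2 ⊢
    have hlvl : lvl G W hne (par G W hc hne u) = lvl G W hne (par G W hc hne u') := by omega
    have hlen : (key G W hc hne ι (par G W hc hne u)).length =
        (key G W hc hne ι (par G W hc hne u')).length := by
      rw [key_length, key_length, hlvl]
    rw [key_ne_root G W hc hne ι hu, key_ne_root G W hc hne ι hu'] at h2
    rcases lt_or_eq_of_le h2 with h3 | h3
    · have h4 : List.Lex (· < ·)
          (key G W hc hne ι (par G W hc hne u) ++ [ι u.1])
          (key G W hc hne ι (par G W hc hne u') ++ [ι u'.1]) := h3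
      rcases lex_concat hlen h4 with h5 | h5
      · right; exact ⟨hlvl, le_of_eq h5⟩
      · right; exact ⟨hlvl, le_of_lt h5⟩
    · have h5 := List.append_inj_left h3 hlen
      right; exact ⟨hlvl, le_of_eq h5⟩

end W

section Enc

variable (W : Finset V) (hc : (distThreeGraph G W).Connected) (hne : W.Nonempty)
  {ι : V → ℕ} (hι : Injective ι) (w : ℕ) (hcard : W.card = w)

noncomputable def enum :=
  @monoEquivOfFin {x // x ∈ W} _ (ord G W hc hne hι) w
    (by rw [Fintype.card_coe]; exact hcard)

lemma enum_le_iff {i j : Fin w} :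
    (ord G W hc hne hι).le (enum G W hc hne hι w hcard i) (enum G W hc hne hι w hcard j) ↔
      i ≤ j := by
  letI := ord G W hc hne hι
  exact OrderIso.le_iff_le (enum G W hc hne hι w hcard)

lemma enum_lt_iff {i j : Fin w} :
    (ord G W hc hne hι).lt (enum G W hc hne hι w hcard i) (enum G W hc hne hι w hcard j) ↔
      i < j := by
  letI := ord G W hc hne hι
  exact OrderIso.lt_iff_lt (enum G W hc hne hι w hcard)

lemma enum_zero (hw : 0 < w) :
    enum G W hc hne hι w hcard ⟨0, hw⟩ = root W hne := by
  letI := ord G W hc hne hι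
  by_contra h0
  have h1 := root_lt G W hc hne hι h0
  have h2 : (ord G W hc hne hι).lt
      (enum G W hc hne hι w hcard ((enum G W hc hne hι w hcard).symm (root W hne)))
      (enum G W hc hne hι w hcard ⟨0, hw⟩) := by
    rw [OrderIso.apply_symm_apply]; exact h1
  rw [enum_lt_iff] at h2
  simp [Fin.lt_def] at h2

lemma enum_ne_root (hw : 0 < w) {i : Fin w} (hi : i.val ≠ 0) :
    enum G W hc hne hι w hcard i ≠ root W hne := by
  letI := ord G W hc hne hι
  intro h
  rw [← enum_zero G W hc hne hι w hcard hw] at h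
  have := (enum G W hc hne hι w hcard).injective h
  rw [Fin.ext_iff] at this
  exact hi this

noncomputable def jdx (i : Fin w) : Fin w :=
  letI := ord G W hc hne hι
  (enum G W hc hne hι w hcard).symm (par G W hc hne (enum G W hc hne hι w hcard i))

lemma enum_jdx (i : Fin w) :
    enum G W hc hne hι w hcard (jdx G W hc hne hι w hcard i) =
      par G W hc hne (enum G W hc hne hι w hcard i) := by
  letI := ord G W hc hne hι
  rw [jdx, OrderIso.apply_symm_apply]

lemma jdx_lt (hw : 0 < w) {i : Fin w} (hi : i.val ≠ 0) :
    jdx G W hc hne hι w hcard i < i := by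
  have h1 := par_lt G W hc hne hι (enum_ne_root G W hc hne hι w hcard hw hi)
  rw [← enum_jdx G W hc hne hι w hcard i] at h1
  rw [enum_lt_iff] at h1
  exact h1

lemma jdx_mono (hw : 0 < w) {i i' : Fin w} (hi : i.val ≠ 0) (hi' : i'.val ≠ 0)
    (h : i ≤ i') : jdx G W hc hne hι w hcard i ≤ jdx G W hc hne hι w hcard i' := by
  have h1 := par_mono G W hc hne hι (enum_ne_root G W hc hne hι w hcard hw hi)
    (enum_ne_root G W hc hne hι w hcard hw hi')
    ((enum_le_iff G W hc hne hι w hcard).mpr h)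
  rw [← enum_jdx G W hc hne hι w hcard i, ← enum_jdx G W hc hne hι w hcard i'] at h1
  rw [enum_le_iff] at h1
  exact h1

noncomputable def Mfun (k : Fin (w - 1)) : Fin (2 * w) :=
  ⟨(jdx G W hc hne hι w hcard ⟨k.val + 1, by omega⟩).val + (k.val + 1), by
    have h1 := (jdx G W hc hne hι w hcard ⟨k.val + 1, by omega⟩).isLt
    have h2 := k.isLt
    omega⟩

lemma Mfun_strictMono : StrictMono (Mfun G W hc hne hι w hcard) := by
  intro k k' hk
  have hw : 0 < w := by have := k.isLt; omega
  have h1 : (⟨k.val + 1, by omega⟩ : Fin w) ≤ ⟨k'.val + 1, by omega⟩ := by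
    rw [Fin.le_def]; simp only
    rw [Fin.lt_def] at hk
    omega
  have h2 := jdx_mono G W hc hne hι w hcard hw
    (i := ⟨k.val + 1, by omega⟩) (i' := ⟨k'.val + 1, by omega⟩) (by simp) (by simp) h1
  rw [Fin.le_def] at h2
  rw [Fin.lt_def] at hk ⊢
  simp only [Mfun]
  omega

noncomputable def Aenc : Finset (Fin (2 * w)) :=
  Finset.image (Mfun G W hc hne hι w hcard) Finset.univ

lemma Aenc_card : (Aenc G W hc hne hι w hcard).card = w - 1 := by
  rw [Aenc, Finset.card_image_of_injective _ (Mfun_strictMono G W hc hne hι w hcard).injective,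
    Finset.card_univ, Fintype.card_fin]

lemma Mfun_eq_orderEmbOfFin :
    ∀ k, Mfun G W hc hne hι w hcard k =
      (Aenc G W hc hne hι w hcard).orderEmbOfFin (Aenc_card G W hc hne hι w hcard) k := by
  have := Finset.orderEmbOfFin_unique (Aenc_card G W hc hne hι w hcard)
    (f := Mfun G W hc hne hι w hcard) (fun x => Finset.mem_image_of_mem _ (Finset.mem_univ x))
    (Mfun_strictMono G W hc hne hι w hcard)
  intro k; rw [this]

lemma adj_dist3 {a b : {x // x ∈ W}} (h : (distThreeGraph G W).Adj a b) :
    G.dist a.1 b.1 = 3 := by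
  rw [distThreeGraph, SimpleGraph.fromRel_adj] at h
  rcases h.2 with h2 | h2
  · exact h2
  · rw [SimpleGraph.dist_comm]; exact h2

variable (d : ℕ) (hd : 1 ≤ d) (hdeg : ∀ v, G.degree v ≤ d)

open Classical in
noncomputable def fenc (i : Fin w) : Fin d × Fin d × Fin d :=
  if h : enum G W hc hne hι w hcard i = root W hne then ⟨⟨0, hd⟩, ⟨0, hd⟩, ⟨0, hd⟩⟩
  else (step3_spec G hdeg (adj_dist3 G W
    (par_adj G W hc hne h))).choose

lemma fenc_spec {i : Fin w} (h : enum G W hc hne hι w hcard i ≠ root W hne) :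
    step3 G d (enum G W hc hne hι w hcard (jdx G W hc hne hι w hcard i)).1
      (fenc G W hc hne hι w hcard d hd hdeg i) = (enum G W hc hne hι w hcard i).1 := by
  rw [fenc, dif_neg h, enum_jdx]
  exact (step3_spec G hdeg (adj_dist3 G W (par_adj G W hc hne h))).choose_spec

end Enc

noncomputable def enc (w d : ℕ) (hd : 1 ≤ d) (hdeg : ∀ v, G.degree v ≤ d) {ι : V → ℕ}
    (hι : Injective ι) (W : Finset V) (hc : (distThreeGraph G W).Connected)
    (hne : W.Nonempty) (hcard : W.card = w) :
    V × Finset (Fin (2 * w)) × (Fin w → Fin d × Fin d × Fin d) :=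
  ((root W hne).1, Aenc G W hc hne hι w hcard, fenc G W hc hne hι w hcard d hd hdeg)

lemma enc_inj (w d : ℕ) (hw : 1 ≤ w) (hd : 1 ≤ d) (hdeg : ∀ v, G.degree v ≤ d) {ι : V → ℕ}
    (hι : Injective ι) (W W' : Finset V)
    (hc : (distThreeGraph G W).Connected) (hne : W.Nonempty) (hcard : W.card = w)
    (hc' : (distThreeGraph G W').Connected) (hne' : W'.Nonempty) (hcard' : W'.card = w)
    (h : enc G w d hd hdeg hι W hc hne hcard = enc G w d hd hdeg hι W' hc' hne' hcard') :
    W = W' := by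
  have h1 : (root W hne).1 = (root W' hne').1 := congrArg Prod.fst h
  have h2 : Aenc G W hc hne hι w hcard = Aenc G W' hc' hne' hι w hcard' :=
    congrArg (fun p => p.2.1) h
  have h3 : fenc G W hc hne hι w hcard d hd hdeg = fenc G W' hc' hne' hι w hcard' d hd hdeg :=
    congrArg (fun p => p.2.2) h
  have hOE : ∀ (A A' : Finset (Fin (2 * w))) (hA : A.card = w - 1) (hA' : A'.card = w - 1),
      A = A' → ∀ k, A.orderEmbOfFin hA k = A'.orderEmbOfFin hA' k := by
    rintro A A' hA hA' rfl k; rfl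
  have hM : ∀ k : Fin (w - 1),
      Mfun G W hc hne hι w hcard k = Mfun G W' hc' hne' hι w hcard' k := by
    intro k
    rw [Mfun_eq_orderEmbOfFin, Mfun_eq_orderEmbOfFin]
    exact hOE _ _ _ _ h2 k
  have hjdx : ∀ i : Fin w, i.val ≠ 0 →
      (jdx G W hc hne hι w hcard i).val = (jdx G W' hc' hne' hι w hcard' i).val := by
    intro i hi
    have hk : i.val - 1 < w - 1 := by have := i.isLt; omega
    have := congrArg Fin.val (hM ⟨i.val - 1, hk⟩)
    simp only [Mfun] at this
    have hival : (⟨(⟨i.val - 1, hk⟩ : Fin (w-1)).val + 1, by omega⟩ : Fin w) = i := by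
      apply Fin.ext; simp; omega
    rw [hival] at this
    omega
  have main : ∀ k, ∀ hk : k < w, (enum G W hc hne hι w hcard ⟨k, hk⟩).1 =
      (enum G W' hc' hne' hι w hcard' ⟨k, hk⟩).1 := by
    intro k
    induction k using Nat.strong_induction_on with
    | _ k ih =>
      intro hk
      by_cases hk0 : k = 0
      · subst hk0
        rw [enum_zero G W hc hne hι w hcard hk, enum_zero G W' hc' hne' hι w hcard' hk]
        exact h1
      · have hi : (⟨k, hk⟩ : Fin w).val ≠ 0 := hk0
        have hroot : enum G W hc hne hι w hcard ⟨k, hk⟩ ≠ root W hne :=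
          enum_ne_root G W hc hne hι w hcard (by omega) hi
        have hroot' : enum G W' hc' hne' hι w hcard' ⟨k, hk⟩ ≠ root W' hne' :=
          enum_ne_root G W' hc' hne' hι w hcard' (by omega) hi
        have e1 := fenc_spec G W hc hne hι w hcard d hd hdeg hroot
        have e1' := fenc_spec G W' hc' hne' hι w hcard' d hd hdeg hroot'
        have hf : fenc G W hc hne hι w hcard d hd hdeg ⟨k, hk⟩ =
            fenc G W' hc' hne' hι w hcard' d hd hdeg ⟨k, hk⟩ := congrFun h3 _
        have hj := hjdx ⟨k, hk⟩ hi
        have hlt : (jdx G W hc hne hι w hcard ⟨k, hk⟩).val < k := by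
          have := jdx_lt G W hc hne hι w hcard (by omega) hi
          rw [Fin.lt_def] at this
          exact this
        have ih1 := ih (jdx G W hc hne hι w hcard ⟨k, hk⟩).val hlt
          (jdx G W hc hne hι w hcard ⟨k, hk⟩).isLt
        rw [Fin.eta] at ih1
        have hjj : jdx G W hc hne hι w hcard ⟨k, hk⟩ =
            jdx G W' hc' hne' hι w hcard' ⟨k, hk⟩ := Fin.ext hj
        nth_rewrite 2 [hjj] at ih1
        rw [← e1, ← e1', ih1, hf]
  apply Finset.ext
  intro x
  constructor
  · intro hx
    letI := ord G W hc hne hι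
    have hi := ((enum G W hc hne hι w hcard).symm ⟨x, hx⟩).isLt
    have hmain := main ((enum G W hc hne hι w hcard).symm ⟨x, hx⟩).val hi
    rw [Fin.eta, OrderIso.apply_symm_apply] at hmain
    have h5 : x = ((enum G W' hc' hne' hι w hcard')
        ⟨((enum G W hc hne hι w hcard).symm ⟨x, hx⟩).val, hi⟩).1 := hmain
    rw [h5]
    exact ((enum G W' hc' hne' hι w hcard') _).2
  · intro hx
    letI := ord G W' hc' hne' hι
    have hi := ((enum G W' hc' hne' hι w hcard').symm ⟨x, hx⟩).isLt
    have hmain := main ((enum G W' hc' hne' hι w hcard').symm ⟨x, hx⟩).val hi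
    rw [Fin.eta, OrderIso.apply_symm_apply] at hmain
    have h5 : x = ((enum G W hc hne hι w hcard)
        ⟨((enum G W' hc' hne' hι w hcard').symm ⟨x, hx⟩).val, hi⟩).1 := hmain.symm
    rw [h5]
    exact ((enum G W hc hne hι w hcard) _).2

end ThreeTreeAux



theorem card_threeTrees_le {V : Type*} [Fintype V] (G : SimpleGraph V)
    [DecidableRel G.Adj] (n d : ℕ) (hn : Fintype.card V = n) (hd : 1 ≤ d)
    (hdeg : ∀ v, G.degree v ≤ d) (w : ℕ) (hw : 1 ≤ w) :
    {W : Finset V | W.card = w ∧ IsThreeTree G W}.ncard ≤ n * (4 * d ^ 3) ^ w := by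
  classical
  set ι : V → ℕ := fun v => (Fintype.equivFin V v).val with hιdef
  have hι : Function.Injective ι :=
    Fin.val_injective.comp (Fintype.equivFin V).injective
  set S := {W : Finset V | W.card = w ∧ IsThreeTree G W} with hS
  set T := V × Finset (Fin (2 * w)) × (Fin w → Fin d × Fin d × Fin d) with hT
  have hF : ∃ F : S → T, Function.Injective F := by
    refine ⟨fun s => ThreeTreeAux.enc G w d hd hdeg hι s.1 s.2.2.2
      (Finset.card_pos.mp (by rw [s.2.1]; omega)) s.2.1, ?_⟩
    intro s t h
    exact Subtype.ext (ThreeTreeAux.enc_inj G w d hw hd hdeg hι _ _ _ _ _ _ _ _ h)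
  obtain ⟨F, hF⟩ := hF
  have hcardT : Nat.card T = n * (2 ^ (2 * w) * (d * (d * d)) ^ w) := by
    rw [hT, Nat.card_eq_fintype_card]
    simp [Fintype.card_prod, Fintype.card_finset, Fintype.card_fun, Fintype.card_fin, hn,
      mul_assoc]
  have hle : S.ncard ≤ Nat.card T := by
    rw [← Nat.card_coe_set_eq S]
    exact Nat.card_le_card_of_injective F hF
  have harith : n * (2 ^ (2 * w) * (d * (d * d)) ^ w) = n * (4 * d ^ 3) ^ w := by
    rw [show (4 : ℕ) = 2 ^ 2 by norm_num, show d * (d * d) = d ^ 3 by ring, mul_pow,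
      pow_mul]
  rw [hcardT, harith] at hle
  exact hle
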